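/- Let λ, μ > 0 and specialize the rates to the discouragement queue: λ_k = λ/(1+k) for k ≥ 0 and μ_k = μ·k for k ≥ 0 (so μ_0 = 0). Then α_i = λ_i/(λ_i+μ_i) = 1/(1 + i(i+1)·(μ/λ)), and the transient distribution of the embedded chain is: p_{n,k} = d_k · T_{(n−k)/2,k} whenever 0 ≤ k ≤ n and n + k is even, and p_{n,k} = 0 otherwise, where d_k = Π_{i=0}^{k−1} 1/(1 + i(i+1)·(μ/λ)). -/

import Mathlib

/-- the discouragement queue `λ_k = λ/(1+k)`, `μ_k = μ·k`. Then
`α_i = 1/(1 + i(i+1)(μ/λ))` and the transient distribution of the embedded chain is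
`p_{n,k} = d_k T_{(n−k)/2,k}` for `k ≤ n` with `n + k` even, `0` otherwise, where
`d_k = ∏_{i=0}^{k−1} 1/(1 + i(i+1)(μ/λ))`. -/
theorem stmt_13 (lambda mu : ℝ) (hlambda : 0 < lambda) (hmu : 0 < mu)
    (lamSeq muSeq : ℕ → ℝ)
    (hlamSeq : ∀ k : ℕ, lamSeq k = lambda / (1 + (k : ℝ)))
    (hmuSeq : ∀ k : ℕ, muSeq k = mu * (k : ℝ))
    (a : ℕ → ℝ) (ha : ∀ k : ℕ, a k = lamSeq k / (lamSeq k + muSeq k))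
    (d : ℕ → ℝ) (hd : ∀ k : ℕ, d k = ∏ i ∈ Finset.range k, a i)
    (p : ℕ → ℕ → ℝ)
    (hp00 : p 0 0 = 1) (hp0 : ∀ k : ℕ, 1 ≤ k → p 0 k = 0)
    (hrec0 : ∀ n : ℕ, p (n + 1) 0 = (1 - a 1) * p n 1)
    (hreck : ∀ n k : ℕ, 1 ≤ k →
      p (n + 1) k = a (k - 1) * p n (k - 1) + (1 - a (k + 1)) * p n (k + 1))
    (T : ℕ → ℕ → ℝ)
    (hT0 : ∀ k : ℕ, T 0 k = 1)
    (hTrec : ∀ h k : ℕ, T (h + 1) k =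
      ∑ l ∈ Finset.range (k + 1), a l * (1 - a (l + 1)) * T h (l + 1)) :
    (∀ i : ℕ, a i = 1 / (1 + (i : ℝ) * ((i : ℝ) + 1) * (mu / lambda))) ∧
    (∀ k : ℕ, d k = ∏ i ∈ Finset.range k, 1 / (1 + (i : ℝ) * ((i : ℝ) + 1) * (mu / lambda))) ∧
    (∀ n k : ℕ, k ≤ n → Even (n + k) → p n k = d k * T ((n - k) / 2) k) ∧
    (∀ n k : ℕ, ¬(k ≤ n ∧ Even (n + k)) → p n k = 0) := by
  have hai : ∀ i : ℕ, a i = 1 / (1 + (i : ℝ) * ((i : ℝ) + 1) * (mu / lambda)) := by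
    intro i
    have h1 : (0:ℝ) < 1 + (i:ℝ) := by positivity
    have h2 : (0:ℝ) < 1 + (i : ℝ) * ((i : ℝ) + 1) * (mu / lambda) := by positivity
    rw [ha, hlamSeq, hmuSeq]
    have h3 : lambda / (1 + (i:ℝ)) + mu * i ≠ 0 := by positivity
    field_simp
    ring
  have ha0 : a 0 = 1 := by
    rw [hai]; norm_num
  have hd0 : d 0 = 1 := by rw [hd]; simp
  have hdsucc : ∀ k : ℕ, d (k + 1) = d k * a k := by
    intro k; rw [hd, hd, Finset.prod_range_succ]
  have key : ∀ n k : ℕ, p n k =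
      if k ≤ n ∧ Even (n + k) then d k * T ((n - k) / 2) k else 0 := by
    intro n
    induction n with
    | zero =>
      intro k
      rcases k with _ | j
      · rw [if_pos ⟨le_refl 0, by simp⟩, hp00, hT0, hd0]; norm_num
      · rw [if_neg (fun h => absurd h.1 (by omega)), hp0 (j + 1) (by omega)]
    | succ n ih =>
      intro k
      rcases k with _ | j
      · -- k = 0
        rw [hrec0, ih 1]
        by_cases hev : Even (n + 1)
        · have h1n : 1 ≤ n := by
            rcases hev with ⟨t, ht⟩; omega
          obtain ⟨m, hm⟩ : ∃ m, n + 1 = 2 * m + 2 := by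
            rcases hev with ⟨t, ht⟩; exact ⟨t - 1, by omega⟩
          have e1 : (n - 1) / 2 = m := by omega
          have e2 : (n + 1 - 0) / 2 = m + 1 := by omega
          rw [if_pos ⟨h1n, hev⟩, if_pos ⟨Nat.zero_le _, by simpa using hev⟩, e1, e2]
          have hT1 : T (m + 1) 0 = a 0 * (1 - a 1) * T m 1 := by
            rw [hTrec m 0, Finset.sum_range_one]
          rw [hT1, ha0, hd0, show (1:ℕ) = 0 + 1 from rfl, hdsucc, hd0, ha0]
          ring
        · have hev3 : ¬ Even (n + 1 + 0) := by simpa using hev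
          have hev1 : ¬ (1 ≤ n ∧ Even (n + 1)) := fun h => hev h.2
          rw [if_neg hev1, if_neg (fun h => hev3 h.2)]
          ring
      · -- k = j + 1
        rw [hreck n (j + 1) (by omega)]
        simp only [Nat.add_sub_cancel]
        rw [ih j, ih (j + 2)]
        by_cases hev : Even (n + j)
        · have hev2 : Even (n + (j + 2)) := by
            rcases hev with ⟨t, ht⟩; exact ⟨t + 1, by omega⟩
          have hev3 : Even (n + 1 + (j + 1)) := by
            rcases hev with ⟨t, ht⟩; exact ⟨t + 1, by omega⟩
          by_cases hjn : j + 2 ≤ n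
          · obtain ⟨m, hm⟩ : ∃ m, n - j = 2 * m + 2 := by
              rcases hev with ⟨t, ht⟩; exact ⟨t - j - 1, by omega⟩
            have e1 : (n - j) / 2 = m + 1 := by omega
            have e2 : (n - (j + 2)) / 2 = m := by omega
            have e3 : (n + 1 - (j + 1)) / 2 = m + 1 := by omega
            rw [if_pos ⟨by omega, hev⟩, if_pos ⟨hjn, hev2⟩, if_pos ⟨by omega, hev3⟩,
              e1, e2, e3]
            have hT1 : T (m + 1) (j + 1) =
                T (m + 1) j + a (j + 1) * (1 - a (j + 2)) * T m (j + 2) := by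
              rw [hTrec m (j + 1), hTrec m j, Finset.sum_range_succ]
            rw [hT1, show j + 2 = (j + 1) + 1 from rfl, hdsucc (j + 1), hdsucc j]
            ring
          · by_cases hjn2 : j ≤ n
            · have hnj : n = j := by rcases hev with ⟨t, ht⟩; omega
              have e1 : (n - j) / 2 = 0 := by omega
              have e3 : (n + 1 - (j + 1)) / 2 = 0 := by omega
              rw [if_pos ⟨hjn2, hev⟩, if_neg (fun h => absurd h.1 (by omega)),
                if_pos ⟨by omega, hev3⟩, e1, e3, hT0, hT0, hdsucc j]
              ring
            · rw [if_neg (fun h => absurd h.1 (by omega)),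
                if_neg (fun h => absurd h.1 (by omega)),
                if_neg (fun h => absurd h.1 (by omega))]
              ring
        · have hev2 : ¬ Even (n + (j + 2)) := by
            simp only [Nat.even_iff] at hev ⊢; omega
          have hev3 : ¬ Even (n + 1 + (j + 1)) := by
            simp only [Nat.even_iff] at hev ⊢; omega
          rw [if_neg (fun h => hev h.2), if_neg (fun h => hev2 h.2),
            if_neg (fun h => hev3 h.2)]
          ring
  refine ⟨hai, ?_, ?_, ?_⟩
  · intro k
    rw [hd]
    exact Finset.prod_congr rfl fun i _ => hai i
  · intro n k hk hev
    rw [key n k, if_pos ⟨hk, hev⟩]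
  · intro n k h
    rw [key n k, if_neg h]
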